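/- Let S ⊆ Y be a nonempty set of valid traces and r the binary reward indicator of S. For every θ ∈ ℝ^d, the inner product in ℝ^d of the REINFORCE gradient g_RL(θ) = Σ_{y ∈ Y} π(θ, y) · r(y) · ∇_θ log π(θ, y) with the SFT gradient on valid traces g_SFT(θ) = Σ_{y ∈ S} (π(θ, y) / P_θ(S)) · ∇_θ log π(θ, y) equals P_θ(S) · ‖g_SFT(θ)‖², and in particular this inner product is nonnegative (an SFT step on valid traces never opposes the REINFORCE direction). -/

import Mathlib

/-- The inner product of the REINFORCE gradient (binary reward) with the SFT
gradient on valid traces equals `P_θ(S) · ‖g_SFT(θ)‖²`, and in particular is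
nonnegative: an SFT step on valid traces never opposes the REINFORCE
direction. -/
theorem sft_reinforce_inner_nonneg
    (d : ℕ) (Y : Type*) [Fintype Y] [Nonempty Y] [DecidableEq Y]
    (pol : EuclideanSpace ℝ (Fin d) → Y → ℝ)
    (hpos : ∀ θ y, 0 < pol θ y)
    (hsum : ∀ θ, ∑ y, pol θ y = 1)
    (hdiff : ∀ y, Differentiable ℝ (fun θ => pol θ y))
    (S : Finset Y) (hS : S.Nonempty)
    (r : Y → ℝ) (hr : ∀ y, r y = if y ∈ S then 1 else 0)
    (θ : EuclideanSpace ℝ (Fin d))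
    (gRL gSFT : EuclideanSpace ℝ (Fin d))
    (hgRL : gRL = ∑ y, (pol θ y * r y) •
        ((pol θ y)⁻¹ • gradient (fun θ' => pol θ' y) θ))
    (hgSFT : gSFT = ∑ y ∈ S, (pol θ y / ∑ y' ∈ S, pol θ y') •
        ((pol θ y)⁻¹ • gradient (fun θ' => pol θ' y) θ)) :
    (inner ℝ gRL gSFT : ℝ) = (∑ y ∈ S, pol θ y) * ‖gSFT‖ ^ 2 ∧
      0 ≤ (inner ℝ gRL gSFT : ℝ) := by
  set P : ℝ := ∑ y ∈ S, pol θ y with hP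
  have hPpos : 0 < P := Finset.sum_pos (fun y _ => hpos θ y) hS
  have hgRL' : gRL = ∑ y ∈ S, gradient (fun θ' => pol θ' y) θ := by
    rw [hgRL, ← Finset.sum_subset (Finset.subset_univ S)]
    · refine Finset.sum_congr rfl fun y hy => ?_
      rw [hr y, if_pos hy, mul_one, smul_smul,
        mul_inv_cancel₀ (hpos θ y).ne', one_smul]
    · intro y _ hy
      rw [hr y, if_neg hy, mul_zero, zero_smul]
  have hgSFT' : gSFT = P⁻¹ • ∑ y ∈ S, gradient (fun θ' => pol θ' y) θ := by
    rw [hgSFT, Finset.smul_sum]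
    refine Finset.sum_congr rfl fun y hy => ?_
    rw [smul_smul]
    congr 1
    rw [div_eq_mul_inv, mul_comm (pol θ y), mul_assoc,
      mul_inv_cancel₀ (hpos θ y).ne', mul_one]
  have key : gRL = P • gSFT := by
    rw [hgSFT', hgRL', smul_smul, mul_inv_cancel₀ hPpos.ne', one_smul]
  have hinner : (inner ℝ gRL gSFT : ℝ) = P * ‖gSFT‖ ^ 2 := by
    rw [key, real_inner_smul_left, real_inner_self_eq_norm_sq]
  exact ⟨hinner, hinner ▸ mul_nonneg hPpos.le (sq_nonneg _)⟩
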